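/- Let φ = (1+√5)/2, R = diag(e^{-4πi/5}, e^{3πi/5}), F = [[φ⁻¹, φ^{-1/2}], [φ^{-1/2}, -φ⁻¹]], and B = F·R·F (so B⁻² = F·R⁻²·F since F² = I₂). Then there exists a nonzero complex scalar c such that R²·B⁻² applied to the vector (1, 0) equals c·(φ^{1/2}·cos(2π/5), -i·sin(2π/5)). (That is, the braid σ₁²σ₂⁻² applied to |0⟩ produces the qubit state (φ^{1/2}cos(2π/5), -i sin(2π/5)), up to a scalar.) -/

import Mathlib

open Matrix

noncomputable def φ : ℝ := (1 + Real.sqrt 5) / 2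

noncomputable def R : Matrix (Fin 2) (Fin 2) ℂ :=
  !![Complex.exp (-(4 * Real.pi * Complex.I) / 5), 0;
     0, Complex.exp (3 * Real.pi * Complex.I / 5)]

noncomputable def F : Matrix (Fin 2) (Fin 2) ℂ :=
  !![((φ⁻¹ : ℝ) : ℂ), (((Real.sqrt φ)⁻¹ : ℝ) : ℂ);
     (((Real.sqrt φ)⁻¹ : ℝ) : ℂ), -((φ⁻¹ : ℝ) : ℂ)]

noncomputable def B : Matrix (Fin 2) (Fin 2) ℂ := F * R * F

noncomputable def zz : ℂ := Complex.exp (Real.pi * Complex.I / 5)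

lemma zz_pow_five : zz ^ 5 = -1 := by
  rw [zz, ← Complex.exp_nat_mul]
  rw [show ((5 : ℕ) : ℂ) * (Real.pi * Complex.I / 5) = Real.pi * Complex.I by push_cast; ring]
  exact Complex.exp_pi_mul_I

lemma zz_ne_zero : zz ≠ 0 := Complex.exp_ne_zero _

lemma phi_pos : 0 < φ := by rw [φ]; positivity

lemma phi_sq : (φ : ℝ) ^ 2 = φ + 1 := by
  have h5 : Real.sqrt 5 ^ 2 = 5 := Real.sq_sqrt (by norm_num)
  rw [φ]; nlinarith [h5]

lemma exp_cos (θ : ℝ) :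
    Complex.exp (θ * Complex.I) + Complex.exp (-θ * Complex.I)
      = 2 * ((Real.cos θ : ℝ) : ℂ) := by
  rw [Complex.exp_mul_I, Complex.exp_mul_I, Complex.cos_neg, Complex.sin_neg,
    Complex.ofReal_cos]
  ring

lemma exp_sin (θ : ℝ) :
    Complex.exp (θ * Complex.I) - Complex.exp (-θ * Complex.I)
      = 2 * Complex.I * ((Real.sin θ : ℝ) : ℂ) := by
  rw [Complex.exp_mul_I, Complex.exp_mul_I, Complex.cos_neg, Complex.sin_neg,
    Complex.ofReal_sin]
  ring

lemma zz_quad : zz ^ 2 = ((φ : ℝ) : ℂ) * zz - 1 := by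
  have h1 : zz + Complex.exp (-(Real.pi / 5 : ℝ) * Complex.I) = ((φ : ℝ) : ℂ) := by
    have := exp_cos (Real.pi / 5)
    rw [Real.cos_pi_div_five] at this
    rw [zz, show (Real.pi : ℂ) * Complex.I / 5 = ((Real.pi / 5 : ℝ) : ℂ) * Complex.I by
      push_cast; ring, this, φ]
    push_cast; ring
  have h2 : Complex.exp (-(Real.pi / 5 : ℝ) * Complex.I) * zz = 1 := by
    rw [zz, ← Complex.exp_add, show (-(Real.pi / 5 : ℝ) : ℂ) * Complex.I +
      (Real.pi : ℂ) * Complex.I / 5 = 0 by push_cast; ring, Complex.exp_zero]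
  linear_combination zz * h1 - h2

lemma exp_eq_zz_pow (n : ℕ) (r : ℝ) (h : (n : ℝ) * (Real.pi / 5) = r) :
    Complex.exp ((r : ℝ) * Complex.I) = zz ^ n := by
  rw [zz, ← Complex.exp_nat_mul]
  congr 1
  rw [← h]; push_cast; ring

lemma he1 : Complex.exp (-(4 * Real.pi * Complex.I) / 5) = -zz := by
  have h4 : Complex.exp ((((4 : ℝ) * Real.pi / 5 : ℝ)) * Complex.I) = zz ^ 4 :=
    exp_eq_zz_pow 4 _ (by ring)
  have hm : Complex.exp (-(4 * Real.pi * Complex.I) / 5) * zz ^ 4 = 1 := by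
    rw [← h4, ← Complex.exp_add,
      show -(4 * (Real.pi : ℂ) * Complex.I) / 5 + (((4 : ℝ) * Real.pi / 5 : ℝ) : ℂ) * Complex.I
        = 0 by push_cast; ring, Complex.exp_zero]
  have hm' : (-zz) * zz ^ 4 = 1 := by linear_combination -zz_pow_five
  exact mul_right_cancel₀ (pow_ne_zero 4 zz_ne_zero) (hm.trans hm'.symm)

lemma he2 : Complex.exp (3 * Real.pi * Complex.I / 5) = zz ^ 3 := by
  have h3 : Complex.exp ((((3 : ℝ) * Real.pi / 5 : ℝ)) * Complex.I) = zz ^ 3 :=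
    exp_eq_zz_pow 3 _ (by ring)
  rw [← h3]; congr 1; push_cast; ring

lemma hcosE : zz ^ 2 - zz ^ 3 = 2 * ((Real.cos (2 * Real.pi / 5) : ℝ) : ℂ) := by
  have h2 : Complex.exp (((2 * Real.pi / 5 : ℝ)) * Complex.I) = zz ^ 2 :=
    exp_eq_zz_pow 2 _ (by ring)
  have hneg : Complex.exp (-((2 * Real.pi / 5 : ℝ)) * Complex.I) = -zz ^ 3 := by
    have hm : Complex.exp (-((2 * Real.pi / 5 : ℝ) : ℂ) * Complex.I) * zz ^ 2 = 1 := by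
      rw [← h2, ← Complex.exp_add,
        show -((2 * Real.pi / 5 : ℝ) : ℂ) * Complex.I + ((2 * Real.pi / 5 : ℝ) : ℂ) * Complex.I
          = 0 by ring, Complex.exp_zero]
    have hm' : (-zz ^ 3) * zz ^ 2 = 1 := by linear_combination -zz_pow_five
    exact mul_right_cancel₀ (pow_ne_zero 2 zz_ne_zero) (hm.trans hm'.symm)
  have := exp_cos (2 * Real.pi / 5)
  rw [h2, hneg] at this
  linear_combination this

lemma hsinE : zz ^ 2 + zz ^ 3 = 2 * Complex.I * ((Real.sin (2 * Real.pi / 5) : ℝ) : ℂ) := by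
  have h2 : Complex.exp (((2 * Real.pi / 5 : ℝ)) * Complex.I) = zz ^ 2 :=
    exp_eq_zz_pow 2 _ (by ring)
  have hneg : Complex.exp (-((2 * Real.pi / 5 : ℝ)) * Complex.I) = -zz ^ 3 := by
    have hm : Complex.exp (-((2 * Real.pi / 5 : ℝ) : ℂ) * Complex.I) * zz ^ 2 = 1 := by
      rw [← h2, ← Complex.exp_add,
        show -((2 * Real.pi / 5 : ℝ) : ℂ) * Complex.I + ((2 * Real.pi / 5 : ℝ) : ℂ) * Complex.I
          = 0 by ring, Complex.exp_zero]
    have hm' : (-zz ^ 3) * zz ^ 2 = 1 := by linear_combination -zz_pow_five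
    exact mul_right_cancel₀ (pow_ne_zero 2 zz_ne_zero) (hm.trans hm'.symm)
  have := exp_sin (2 * Real.pi / 5)
  rw [h2, hneg] at this
  linear_combination this

noncomputable def RI : Matrix (Fin 2) (Fin 2) ℂ := !![zz ^ 4, 0; 0, -zz ^ 2]

lemma hs2 : ((Real.sqrt φ : ℝ) : ℂ) ^ 2 = ((φ : ℝ) : ℂ) := by
  exact_mod_cast congrArg (Complex.ofReal) (Real.sq_sqrt phi_pos.le)

lemma hPC : ((φ : ℝ) : ℂ) ^ 2 = ((φ : ℝ) : ℂ) + 1 := by exact_mod_cast phi_sq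

lemma hP0 : ((φ : ℝ) : ℂ) ≠ 0 := Complex.ofReal_ne_zero.2 phi_pos.ne'

lemma hS0 : ((Real.sqrt φ : ℝ) : ℂ) ≠ 0 :=
  Complex.ofReal_ne_zero.2 (Real.sqrt_pos.2 phi_pos).ne'

lemma hFF : F * F = 1 := by
  ext i j
  fin_cases i <;> fin_cases j <;>
    simp [F, Matrix.mul_apply, Fin.sum_univ_two, Matrix.one_apply]
  · field_simp [hP0, hS0]
    rw [hs2]; field_simp [hP0]
    linear_combination (((φ:ℝ):ℂ) * ((φ:ℝ):ℂ)⁻¹ + 1) * mul_inv_cancel₀ hP0 - ((φ:ℝ):ℂ)⁻¹ ^ 2 * hPC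
  · ring
  · ring
  · field_simp [hP0, hS0]
    rw [hs2]; field_simp [hP0]
    linear_combination (((φ:ℝ):ℂ) * ((φ:ℝ):ℂ)⁻¹ + 1) * mul_inv_cancel₀ hP0 - ((φ:ℝ):ℂ)⁻¹ ^ 2 * hPC

lemma hRRI : R * RI = 1 := by
  rw [R, he1, he2, RI]
  ext i j
  fin_cases i <;> fin_cases j <;>
    simp [Matrix.mul_apply, Fin.sum_univ_two, Matrix.one_apply]
  · linear_combination -zz_pow_five
  · linear_combination -zz_pow_five

lemma hBinv : B⁻¹ = F * RI * F := by
  apply Matrix.inv_eq_right_inv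
  calc B * (F * RI * F) = F * R * (F * F) * (RI * F) := by
        rw [B]; simp only [Matrix.mul_assoc]
    _ = F * (R * RI) * F := by rw [hFF, Matrix.mul_one]; simp only [Matrix.mul_assoc]
    _ = 1 := by rw [hRRI, Matrix.mul_one, hFF]

lemma hainv : ((φ : ℝ) : ℂ)⁻¹ = ((φ : ℝ) : ℂ) - 1 :=
  inv_eq_of_mul_eq_one_right (by linear_combination hPC)

lemma hbinv : ((Real.sqrt φ : ℝ) : ℂ)⁻¹
    = ((Real.sqrt φ : ℝ) : ℂ) * (((φ : ℝ) : ℂ) - 1) :=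
  inv_eq_of_mul_eq_one_right (by linear_combination (((φ:ℝ):ℂ) - 1) * hs2 + hPC)

lemma hcosE2 : zz ^ 2 - zz ^ 3 = 2 * Complex.cos (2 * (Real.pi : ℂ) / 5) := by
  rw [hcosE, Complex.ofReal_cos]
  push_cast
  ring

lemma hsinE2 : zz ^ 2 + zz ^ 3
    = 2 * (Complex.I * Complex.sin (2 * (Real.pi : ℂ) / 5)) := by
  rw [hsinE, Complex.ofReal_sin]
  push_cast
  ring

set_option maxHeartbeats 1600000 in
/-- The braid σ₁²σ₂⁻² applied to |0⟩ = (1,0) produces the qubit state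
`(φ^{1/2}·cos(2π/5), -i·sin(2π/5))` up to a nonzero scalar. -/
theorem braid_creates_ancilla_qubit :
    ∃ c : ℂ, c ≠ 0 ∧
      (R ^ 2 * B⁻¹ ^ 2) *ᵥ ![1, 0] =
        c • ![((Real.sqrt φ * Real.cos (2 * Real.pi / 5) : ℝ) : ℂ),
              -Complex.I * ((Real.sin (2 * Real.pi / 5) : ℝ) : ℂ)] := by
  refine ⟨-2 * ((φ : ℝ) : ℂ)⁻¹ * ((Real.sqrt φ : ℝ) : ℂ)⁻¹ * zz ^ 2, ?_, ?_⟩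
  · exact mul_ne_zero (mul_ne_zero (mul_ne_zero (by norm_num) (inv_ne_zero hP0))
      (inv_ne_zero hS0)) (pow_ne_zero 2 zz_ne_zero)
  · rw [hBinv, R, he1, he2]
    funext i
    fin_cases i <;>
      simp [pow_two, F, RI, Matrix.mul_apply, Matrix.mulVec, dotProduct, Fin.sum_univ_two]
    · linear_combination (((φ:ℝ):ℂ)⁻¹^3*zz^10 + ((φ:ℝ):ℂ)⁻¹^2*zz^10*((φ:ℝ):ℂ) + (-1)*((φ:ℝ):ℂ)⁻¹^2*zz^10 + ((φ:ℝ):ℂ)⁻¹*((Real.sqrt φ:ℝ):ℂ)⁻¹^2*zz^10 + ((φ:ℝ):ℂ)⁻¹*((Real.sqrt φ:ℝ):ℂ)⁻¹^2*zz^6 + ((φ:ℝ):ℂ)⁻¹*zz^10*((φ:ℝ):ℂ)^2 + (-2)*((φ:ℝ):ℂ)⁻¹*zz^10*((φ:ℝ):ℂ) + ((φ:ℝ):ℂ)⁻¹*zz^10 + ((Real.sqrt φ:ℝ):ℂ)⁻¹^2*zz^10*((φ:ℝ):ℂ) + (-1)*((Real.sqrt φ:ℝ):ℂ)⁻¹^2*zz^10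 + ((Real.sqrt φ:ℝ):ℂ)⁻¹^2*zz^6*((φ:ℝ):ℂ) + (-1)*((Real.sqrt φ:ℝ):ℂ)⁻¹^2*zz^6 + (2)*((Real.sqrt φ:ℝ):ℂ)⁻¹*(Complex.cos (2 * (Real.pi:ℂ) / 5))*((Real.sqrt φ:ℝ):ℂ)*zz^2 + zz^10*((φ:ℝ):ℂ)^3 + (-3)*zz^10*((φ:ℝ):ℂ)^2 + (3)*zz^10*((φ:ℝ):ℂ) + (-1)*zz^10) * hainv +
      (((Real.sqrt φ:ℝ):ℂ)⁻¹^3*zz^6 + ((Real.sqrt φ:ℝ):ℂ)⁻¹^2*((Real.sqrt φ:ℝ):ℂ)*zz^6*((φ:ℝ):ℂ) + (-1)*((Real.sqrt φ:ℝ):ℂ)⁻¹^2*((Real.sqrt φ:ℝ):ℂ)*zz^6 + ((Real.sqrt φ:ℝ):ℂ)⁻¹*((Real.sqrt φ:ℝ):ℂ)^2*zz^6*((φ:ℝ):ℂ)^2 + (-2)*((Real.sqrt φ:ℝ):ℂ)⁻¹*((Real.sqrt φ:ℝ):ℂ)^2*zz^6*((φ:ℝ):ℂ) + ((Real.sqrt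 φ:ℝ):ℂ)⁻¹*((Real.sqrt φ:ℝ):ℂ)^2*zz^6 + ((Real.sqrt φ:ℝ):ℂ)⁻¹*zz^10*((φ:ℝ):ℂ)^2 + (-2)*((Real.sqrt φ:ℝ):ℂ)⁻¹*zz^10*((φ:ℝ):ℂ) + ((Real.sqrt φ:ℝ):ℂ)⁻¹*zz^10 + ((Real.sqrt φ:ℝ):ℂ)⁻¹*zz^6*((φ:ℝ):ℂ)^2 + (-2)*((Real.sqrt φ:ℝ):ℂ)⁻¹*zz^6*((φ:ℝ):ℂ) + ((Real.sqrt φ:ℝ):ℂ)⁻¹*zz^6 + (2)*(Complex.cos (2 * (Real.pi:ℂ) / 5))*((Real.sqrt φ:ℝ):ℂ)*zz^2*((φ:ℝ):ℂ) + (-2)*(Complex.cos (2 * (Real.pi:ℂ) / 5))*((Real.sqrt φ:ℝ):ℂ)*zz^2 + ((Real.sqrt φ:ℝ):ℂ)^3*zz^6*((φ:ℝ):ℂ)^3 + (-3)*((Real.sqrt φ:ℝ):ℂ)^3*zz^6*((φ:ℝ):ℂ)^2 + (3)*((Real.sqrt φ:ℝ):ℂ)^3*zz^6*((φ:ℝ):ℂ)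 + (-1)*((Real.sqrt φ:ℝ):ℂ)^3*zz^6 + ((Real.sqrt φ:ℝ):ℂ)*zz^10*((φ:ℝ):ℂ)^3 + (-3)*((Real.sqrt φ:ℝ):ℂ)*zz^10*((φ:ℝ):ℂ)^2 + (3)*((Real.sqrt φ:ℝ):ℂ)*zz^10*((φ:ℝ):ℂ) + (-1)*((Real.sqrt φ:ℝ):ℂ)*zz^10 + ((Real.sqrt φ:ℝ):ℂ)*zz^6*((φ:ℝ):ℂ)^3 + (-3)*((Real.sqrt φ:ℝ):ℂ)*zz^6*((φ:ℝ):ℂ)^2 + (3)*((Real.sqrt φ:ℝ):ℂ)*zz^6*((φ:ℝ):ℂ) + (-1)*((Real.sqrt φ:ℝ):ℂ)*zz^6) * hbinv +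
      ((-1)*((Real.sqrt φ:ℝ):ℂ)^2*zz^2*((φ:ℝ):ℂ)^2 + (2)*((Real.sqrt φ:ℝ):ℂ)^2*zz^2*((φ:ℝ):ℂ) + (-1)*((Real.sqrt φ:ℝ):ℂ)^2*zz^2) * hcosE2 +
      (((Real.sqrt φ:ℝ):ℂ)^2*zz^6*((φ:ℝ):ℂ)^4 + (-4)*((Real.sqrt φ:ℝ):ℂ)^2*zz^6*((φ:ℝ):ℂ)^3 + (6)*((Real.sqrt φ:ℝ):ℂ)^2*zz^6*((φ:ℝ):ℂ)^2 + (-4)*((Real.sqrt φ:ℝ):ℂ)^2*zz^6*((φ:ℝ):ℂ) + ((Real.sqrt φ:ℝ):ℂ)^2*zz^6 + zz^10*((φ:ℝ):ℂ)^4 + (-4)*zz^10*((φ:ℝ):ℂ)^3 + (6)*zz^10*((φ:ℝ):ℂ)^2 + (-4)*zz^10*((φ:ℝ):ℂ) + zz^10 + zz^6*((φ:ℝ):ℂ)^5 + (-3)*zz^6*((φ:ℝ):ℂ)^4 + (2)*zz^6*((φ:ℝ):ℂ)^3 + (2)*zz^6*((φ:ℝ):ℂ)^2 + (-3)*zz^6*((φ:ℝ):ℂ)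 + zz^6 + (-1)*zz^5*((φ:ℝ):ℂ)^2 + (2)*zz^5*((φ:ℝ):ℂ) + (-1)*zz^5 + zz^4*((φ:ℝ):ℂ)^2 + (-2)*zz^4*((φ:ℝ):ℂ) + zz^4) * hs2 +
      (zz^5*((φ:ℝ):ℂ)^5 + (-3)*zz^5*((φ:ℝ):ℂ)^4 + (2)*zz^5*((φ:ℝ):ℂ)^3 + (2)*zz^5*((φ:ℝ):ℂ)^2 + (-3)*zz^5*((φ:ℝ):ℂ) + zz^5 + zz*((φ:ℝ):ℂ)^6 + (-3)*zz*((φ:ℝ):ℂ)^5 + (2)*zz*((φ:ℝ):ℂ)^4 + (2)*zz*((φ:ℝ):ℂ)^3 + (-3)*zz*((φ:ℝ):ℂ)^2 + zz*((φ:ℝ):ℂ) + (-1)*((φ:ℝ):ℂ)^5 + (3)*((φ:ℝ):ℂ)^4 + (-3)*((φ:ℝ):ℂ)^3 + (2)*((φ:ℝ):ℂ) + (-1)) * zz_pow_five +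
      (zz^2*((φ:ℝ):ℂ)^3 + (-2)*zz^2*((φ:ℝ):ℂ)^2 + zz^2*((φ:ℝ):ℂ) + zz*((φ:ℝ):ℂ)^4 + (-2)*zz*((φ:ℝ):ℂ)^3 + zz*((φ:ℝ):ℂ)^2 + ((φ:ℝ):ℂ)^5 + (-2)*((φ:ℝ):ℂ)^4 + (2)*((φ:ℝ):ℂ)^2 + (-1)*((φ:ℝ):ℂ)) * zz_quad +
      (zz*((φ:ℝ):ℂ)^3 + (-2)*zz*((φ:ℝ):ℂ)^2 + zz*((φ:ℝ):ℂ) + (-1)*((φ:ℝ):ℂ)^2 + (2)*((φ:ℝ):ℂ) + (-1)) * hPC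
    · linear_combination (((φ:ℝ):ℂ)⁻¹^2*((Real.sqrt φ:ℝ):ℂ)⁻¹*zz^14 + (-1)*((φ:ℝ):ℂ)⁻¹^2*((Real.sqrt φ:ℝ):ℂ)⁻¹*zz^10 + ((φ:ℝ):ℂ)⁻¹*((Real.sqrt φ:ℝ):ℂ)⁻¹*zz^14*((φ:ℝ):ℂ) + (-1)*((φ:ℝ):ℂ)⁻¹*((Real.sqrt φ:ℝ):ℂ)⁻¹*zz^14 + (-1)*((φ:ℝ):ℂ)⁻¹*((Real.sqrt φ:ℝ):ℂ)⁻¹*zz^10*((φ:ℝ):ℂ) + ((φ:ℝ):ℂ)⁻¹*((Real.sqrt φ:ℝ):ℂ)⁻¹*zz^10 + ((Real.sqrt φ:ℝ):ℂ)⁻¹^3*zz^14 + (-1)*((Real.sqrt φ:ℝ):ℂ)⁻¹^3*zz^10 + (-2)*((Real.sqrt φ:ℝ):ℂ)⁻¹*(Complex.I * Complex.sin (2 * (Real.pi:ℂ) / 5))*zz^2 + ((Real.sqrt φ:ℝ):ℂ)⁻¹*zz^14*((φ:ℝ):ℂ)^2 + (-2)*((Real.sqrt φ:ℝ):ℂ)⁻¹*zz^14*((φ:ℝ):ℂ)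 + ((Real.sqrt φ:ℝ):ℂ)⁻¹*zz^14 + (-1)*((Real.sqrt φ:ℝ):ℂ)⁻¹*zz^10*((φ:ℝ):ℂ)^2 + (2)*((Real.sqrt φ:ℝ):ℂ)⁻¹*zz^10*((φ:ℝ):ℂ) + (-1)*((Real.sqrt φ:ℝ):ℂ)⁻¹*zz^10) * hainv +
      (((Real.sqrt φ:ℝ):ℂ)⁻¹^2*zz^14*((φ:ℝ):ℂ) + (-1)*((Real.sqrt φ:ℝ):ℂ)⁻¹^2*zz^14 + (-1)*((Real.sqrt φ:ℝ):ℂ)⁻¹^2*zz^10*((φ:ℝ):ℂ) + ((Real.sqrt φ:ℝ):ℂ)⁻¹^2*zz^10 + ((Real.sqrt φ:ℝ):ℂ)⁻¹*((Real.sqrt φ:ℝ):ℂ)*zz^14*((φ:ℝ):ℂ)^2 + (-2)*((Real.sqrt φ:ℝ):ℂ)⁻¹*((Real.sqrt φ:ℝ):ℂ)*zz^14*((φ:ℝ):ℂ) + ((Real.sqrt φ:ℝ):ℂ)⁻¹*((Real.sqrt φ:ℝ):ℂ)*zz^14 + (-1)*((Real.sqrt φ:ℝ):ℂ)⁻¹*((Real.sqrt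 φ:ℝ):ℂ)*zz^10*((φ:ℝ):ℂ)^2 + (2)*((Real.sqrt φ:ℝ):ℂ)⁻¹*((Real.sqrt φ:ℝ):ℂ)*zz^10*((φ:ℝ):ℂ) + (-1)*((Real.sqrt φ:ℝ):ℂ)⁻¹*((Real.sqrt φ:ℝ):ℂ)*zz^10 + (-2)*(Complex.I * Complex.sin (2 * (Real.pi:ℂ) / 5))*zz^2*((φ:ℝ):ℂ) + (2)*(Complex.I * Complex.sin (2 * (Real.pi:ℂ) / 5))*zz^2 + ((Real.sqrt φ:ℝ):ℂ)^2*zz^14*((φ:ℝ):ℂ)^3 + (-3)*((Real.sqrt φ:ℝ):ℂ)^2*zz^14*((φ:ℝ):ℂ)^2 + (3)*((Real.sqrt φ:ℝ):ℂ)^2*zz^14*((φ:ℝ):ℂ) + (-1)*((Real.sqrt φ:ℝ):ℂ)^2*zz^14 + (-1)*((Real.sqrt φ:ℝ):ℂ)^2*zz^10*((φ:ℝ):ℂ)^3 + (3)*((Real.sqrt φ:ℝ):ℂ)^2*zz^10*((φ:ℝ):ℂ)^2 + (-3)*((Real.sqrt φ:ℝ):ℂ)^2*zz^10*((φ:ℝ):ℂ)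 + ((Real.sqrt φ:ℝ):ℂ)^2*zz^10 + zz^14*((φ:ℝ):ℂ)^3 + (-3)*zz^14*((φ:ℝ):ℂ)^2 + (3)*zz^14*((φ:ℝ):ℂ) + (-1)*zz^14 + (-1)*zz^10*((φ:ℝ):ℂ)^3 + (3)*zz^10*((φ:ℝ):ℂ)^2 + (-3)*zz^10*((φ:ℝ):ℂ) + zz^10) * hbinv +
      (((Real.sqrt φ:ℝ):ℂ)*zz^2*((φ:ℝ):ℂ)^2 + (-2)*((Real.sqrt φ:ℝ):ℂ)*zz^2*((φ:ℝ):ℂ) + ((Real.sqrt φ:ℝ):ℂ)*zz^2) * hsinE2 +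
      (((Real.sqrt φ:ℝ):ℂ)*zz^14*((φ:ℝ):ℂ)^4 + (-4)*((Real.sqrt φ:ℝ):ℂ)*zz^14*((φ:ℝ):ℂ)^3 + (6)*((Real.sqrt φ:ℝ):ℂ)*zz^14*((φ:ℝ):ℂ)^2 + (-4)*((Real.sqrt φ:ℝ):ℂ)*zz^14*((φ:ℝ):ℂ) + ((Real.sqrt φ:ℝ):ℂ)*zz^14 + (-1)*((Real.sqrt φ:ℝ):ℂ)*zz^10*((φ:ℝ):ℂ)^4 + (4)*((Real.sqrt φ:ℝ):ℂ)*zz^10*((φ:ℝ):ℂ)^3 + (-6)*((Real.sqrt φ:ℝ):ℂ)*zz^10*((φ:ℝ):ℂ)^2 + (4)*((Real.sqrt φ:ℝ):ℂ)*zz^10*((φ:ℝ):ℂ) + (-1)*((Real.sqrt φ:ℝ):ℂ)*zz^10) * hs2 +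
      (((Real.sqrt φ:ℝ):ℂ)*zz^9*((φ:ℝ):ℂ)^5 + (-3)*((Real.sqrt φ:ℝ):ℂ)*zz^9*((φ:ℝ):ℂ)^4 + (2)*((Real.sqrt φ:ℝ):ℂ)*zz^9*((φ:ℝ):ℂ)^3 + (2)*((Real.sqrt φ:ℝ):ℂ)*zz^9*((φ:ℝ):ℂ)^2 + (-3)*((Real.sqrt φ:ℝ):ℂ)*zz^9*((φ:ℝ):ℂ) + ((Real.sqrt φ:ℝ):ℂ)*zz^9 + (-1)*((Real.sqrt φ:ℝ):ℂ)*zz^5*((φ:ℝ):ℂ)^5 + (3)*((Real.sqrt φ:ℝ):ℂ)*zz^5*((φ:ℝ):ℂ)^4 + (-2)*((Real.sqrt φ:ℝ):ℂ)*zz^5*((φ:ℝ):ℂ)^3 + (-2)*((Real.sqrt φ:ℝ):ℂ)*zz^5*((φ:ℝ):ℂ)^2 + (3)*((Real.sqrt φ:ℝ):ℂ)*zz^5*((φ:ℝ):ℂ) + (-1)*((Real.sqrt φ:ℝ):ℂ)*zz^5 + (-1)*((Real.sqrt φ:ℝ):ℂ)*zz^4*((φ:ℝ):ℂ)^5 +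 (3)*((Real.sqrt φ:ℝ):ℂ)*zz^4*((φ:ℝ):ℂ)^4 + (-2)*((Real.sqrt φ:ℝ):ℂ)*zz^4*((φ:ℝ):ℂ)^3 + (-2)*((Real.sqrt φ:ℝ):ℂ)*zz^4*((φ:ℝ):ℂ)^2 + (3)*((Real.sqrt φ:ℝ):ℂ)*zz^4*((φ:ℝ):ℂ) + (-1)*((Real.sqrt φ:ℝ):ℂ)*zz^4 + ((Real.sqrt φ:ℝ):ℂ)*((φ:ℝ):ℂ)^5 + (-3)*((Real.sqrt φ:ℝ):ℂ)*((φ:ℝ):ℂ)^4 + (2)*((Real.sqrt φ:ℝ):ℂ)*((φ:ℝ):ℂ)^3 + ((Real.sqrt φ:ℝ):ℂ)*((φ:ℝ):ℂ)^2 + (-1)*((Real.sqrt φ:ℝ):ℂ)*((φ:ℝ):ℂ)) * zz_pow_five +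
      (((Real.sqrt φ:ℝ):ℂ)*zz^2*((φ:ℝ):ℂ)^5 + (-3)*((Real.sqrt φ:ℝ):ℂ)*zz^2*((φ:ℝ):ℂ)^4 + (2)*((Real.sqrt φ:ℝ):ℂ)*zz^2*((φ:ℝ):ℂ)^3 + ((Real.sqrt φ:ℝ):ℂ)*zz^2*((φ:ℝ):ℂ)^2 + (-1)*((Real.sqrt φ:ℝ):ℂ)*zz^2*((φ:ℝ):ℂ) + ((Real.sqrt φ:ℝ):ℂ)*zz*((φ:ℝ):ℂ)^6 + (-3)*((Real.sqrt φ:ℝ):ℂ)*zz*((φ:ℝ):ℂ)^5 + (2)*((Real.sqrt φ:ℝ):ℂ)*zz*((φ:ℝ):ℂ)^4 + ((Real.sqrt φ:ℝ):ℂ)*zz*((φ:ℝ):ℂ)^3 + (-1)*((Real.sqrt φ:ℝ):ℂ)*zz*((φ:ℝ):ℂ)^2 + ((Real.sqrt φ:ℝ):ℂ)*((φ:ℝ):ℂ)^7 + (-3)*((Real.sqrt φ:ℝ):ℂ)*((φ:ℝ):ℂ)^6 + ((Real.sqrt φ:ℝ):ℂ)*((φ:ℝ):ℂ)^5 + (4)*((Real.sqrt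 φ:ℝ):ℂ)*((φ:ℝ):ℂ)^4 + (-3)*((Real.sqrt φ:ℝ):ℂ)*((φ:ℝ):ℂ)^3 + (-1)*((Real.sqrt φ:ℝ):ℂ)*((φ:ℝ):ℂ)^2 + ((Real.sqrt φ:ℝ):ℂ)*((φ:ℝ):ℂ)) * zz_quad +
      (((Real.sqrt φ:ℝ):ℂ)*zz*((φ:ℝ):ℂ)^6 + (-2)*((Real.sqrt φ:ℝ):ℂ)*zz*((φ:ℝ):ℂ)^5 + (-1)*((Real.sqrt φ:ℝ):ℂ)*zz*((φ:ℝ):ℂ)^4 + (4)*((Real.sqrt φ:ℝ):ℂ)*zz*((φ:ℝ):ℂ)^3 + (-2)*((Real.sqrt φ:ℝ):ℂ)*zz*((φ:ℝ):ℂ)^2 + (-1)*((Real.sqrt φ:ℝ):ℂ)*((φ:ℝ):ℂ)^5 + (2)*((Real.sqrt φ:ℝ):ℂ)*((φ:ℝ):ℂ)^4 + (-1)*((Real.sqrt φ:ℝ):ℂ)*((φ:ℝ):ℂ)^3) * hPC
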